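/- arXiv:1101.1032 — 3 statements merged into one kernel-verified Lean document; each statement's English description precedes it below -/
import Mathlib

section
/- Assume conditions (I)–(IV) and that for all δ,η>0: √m_n·Q_n(|ε̃_n|^p·1{ζ_n−δ/m_n < Z ≤ ζ_n+η/m_n}) → 0 for p=1,2, and √m_n·Q_n(1{ζ_n−δ/m_n < Z ≤ ζ_n+η/m_n}) → 0. Then for every compact rectangle K ⊂ ℝ³, sup_{h∈K} |E*_n(h) − Ê_n(h)| → 0 in probability. (Lemma 3.3, stated in the supremum norm.) -/
open MeasureTheory Filter Set

noncomputable section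

/-- The least squares criterion `m_θ(x) = −(y − α·1{z ≤ ζ} − β·1{z > ζ})²`
for `θ = (α, β, ζ)` and `x = (y, z)`. -/
def mfn (θ : ℝ × ℝ × ℝ) (x : ℝ × ℝ) : ℝ :=
  -(x.1 - (if x.2 ≤ θ.2.2 then θ.1 else θ.2.1)) ^ 2

/-- The residual function `ε̃_θ(y,z) = y − α·1{z ≤ ζ} − β·1{z > ζ}` for `θ = (α,β,ζ)`. -/
def epstil (θ : ℝ × ℝ × ℝ) (x : ℝ × ℝ) : ℝ :=
  x.1 - (if x.2 ≤ θ.2.2 then θ.1 else θ.2.1)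

/-- Empirical average `ℙ*_n(g)` of `g` over the sample `Xr 0, …, Xr (M-1)`. -/
def empAvg {Ω : Type} (M : ℕ) (Xr : ℕ → Ω → ℝ × ℝ) (g : ℝ × ℝ → ℝ) (ω : Ω) : ℝ :=
  (M : ℝ)⁻¹ * ∑ k ∈ Finset.range M, g (Xr k ω)

/-- The localized process `Ê_n(h) = m_n·ℙ*_n(m_{ϑ_{n,h}} − m_{θ_n})`, where
`ϑ_{n,h} = θ_n + (h₁/√m_n, h₂/√m_n, h₃/m_n)`. -/
def Ehat {Ω : Type} (M : ℕ) (Xr : ℕ → Ω → ℝ × ℝ) (θn : ℝ × ℝ × ℝ)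
    (h : ℝ × ℝ × ℝ) (ω : Ω) : ℝ :=
  (M : ℝ) * empAvg M Xr (fun x =>
    mfn (θn.1 + h.1 / Real.sqrt M, θn.2.1 + h.2.1 / Real.sqrt M, θn.2.2 + h.2.2 / M) x
      - mfn θn x) ω

/-- The process `E*_n(h) = A*_n(h₁) + B*_n(h₂) + C*_n(h₃) + D*_n(h₃)`. -/
def Estar {Ω : Type} (M : ℕ) (Xr : ℕ → Ω → ℝ × ℝ) (θn : ℝ × ℝ × ℝ)
    (h : ℝ × ℝ × ℝ) (ω : Ω) : ℝ :=
  -- A*_n(h₁)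
  (2 * h.1 * Real.sqrt M *
      empAvg M Xr (fun x => epstil θn x * (Iic θn.2.2).indicator (fun _ => (1:ℝ)) x.2) ω
    - h.1 ^ 2 * empAvg M Xr (fun x => (Iic θn.2.2).indicator (fun _ => (1:ℝ)) x.2) ω)
  -- B*_n(h₂)
  + (2 * h.2.1 * Real.sqrt M *
      empAvg M Xr (fun x => epstil θn x * (Ioi θn.2.2).indicator (fun _ => (1:ℝ)) x.2) ω
    - h.2.1 ^ 2 * empAvg M Xr (fun x => (Ioi θn.2.2).indicator (fun _ => (1:ℝ)) x.2) ω)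
  -- C*_n(h₃)
  + (-(2 * (M : ℝ) * (θn.1 - θn.2.1)) *
      empAvg M Xr (fun x => epstil θn x *
        (Ioc (θn.2.2 + h.2.2 / M) θn.2.2).indicator (fun _ => (1:ℝ)) x.2) ω
    - (M : ℝ) * (θn.1 - θn.2.1) ^ 2 *
      empAvg M Xr (fun x =>
        (Ioc (θn.2.2 + h.2.2 / M) θn.2.2).indicator (fun _ => (1:ℝ)) x.2) ω)
  -- D*_n(h₃)
  + (-(2 * (M : ℝ) * (θn.2.1 - θn.1)) *
      empAvg M Xr (fun x => epstil θn x *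
        (Ioc θn.2.2 (θn.2.2 + h.2.2 / M)).indicator (fun _ => (1:ℝ)) x.2) ω
    - (M : ℝ) * (θn.2.1 - θn.1) ^ 2 *
      empAvg M Xr (fun x =>
        (Ioc θn.2.2 (θn.2.2 + h.2.2 / M)).indicator (fun _ => (1:ℝ)) x.2) ω)

def Gpt (s MR : ℝ) (θn h : ℝ × ℝ × ℝ) (x : ℝ × ℝ) : ℝ :=
  2 * h.1 * s * (epstil θn x * (Iic θn.2.2).indicator (fun _ => (1:ℝ)) x.2)
  - h.1 ^ 2 * (Iic θn.2.2).indicator (fun _ => (1:ℝ)) x.2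
  + (2 * h.2.1 * s * (epstil θn x * (Ioi θn.2.2).indicator (fun _ => (1:ℝ)) x.2)
  - h.2.1 ^ 2 * (Ioi θn.2.2).indicator (fun _ => (1:ℝ)) x.2)
  + (-(2 * MR * (θn.1 - θn.2.1)) * (epstil θn x *
      (Ioc (θn.2.2 + h.2.2 / MR) θn.2.2).indicator (fun _ => (1:ℝ)) x.2)
  - MR * (θn.1 - θn.2.1) ^ 2 * (Ioc (θn.2.2 + h.2.2 / MR) θn.2.2).indicator (fun _ => (1:ℝ)) x.2)
  + (-(2 * MR * (θn.2.1 - θn.1)) * (epstil θn x *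
      (Ioc θn.2.2 (θn.2.2 + h.2.2 / MR)).indicator (fun _ => (1:ℝ)) x.2)
  - MR * (θn.2.1 - θn.1) ^ 2 * (Ioc θn.2.2 (θn.2.2 + h.2.2 / MR)).indicator (fun _ => (1:ℝ)) x.2)
  - MR * (mfn (θn.1 + h.1 / s, θn.2.1 + h.2.1 / s, θn.2.2 + h.2.2 / MR) x - mfn θn x)

lemma Estar_sub_Ehat {Ω : Type} (M : ℕ) (Xr : ℕ → Ω → ℝ × ℝ) (θn h : ℝ × ℝ × ℝ) (ω : Ω) :
    Estar M Xr θn h ω - Ehat M Xr θn h ω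
      = (M:ℝ)⁻¹ * ∑ k ∈ Finset.range M, Gpt (Real.sqrt M) (M:ℝ) θn h (Xr k ω) := by
  simp only [Estar, Ehat, empAvg, Gpt, Finset.sum_add_distrib, Finset.sum_sub_distrib,
    ← Finset.mul_sum]
  ring

set_option maxHeartbeats 1000000 in
lemma Gpt_bd (A B s : ℝ) (θn h : ℝ × ℝ × ℝ) (x : ℝ × ℝ)
    (hs : 1 ≤ s) (hB : 0 < B)
    (hb1 : |h.1| ≤ B) (hb2 : |h.2.1| ≤ B) (hb3 : |h.2.2| ≤ B)
    (hA1 : |θn.1| ≤ A) (hA2 : |θn.2.1| ≤ A) :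
    |Gpt s (s ^ 2) θn h x| ≤
      s * ((4 * B * |epstil θn x| + (2 * B ^ 2 + 4 * A * B)) *
        (Ioc (θn.2.2 - B / s ^ 2) (θn.2.2 + B / s ^ 2)).indicator (fun _ => (1:ℝ)) x.2) := by
  obtain ⟨α, β, ζ⟩ := θn
  obtain ⟨h1, h2, h3⟩ := h
  obtain ⟨y, z⟩ := x
  simp only at hb1 hb2 hb3 hA1 hA2
  have hs0 : (0:ℝ) < s := lt_of_lt_of_le one_pos hs
  have hs0' : s ≠ 0 := ne_of_gt hs0
  have hMR0 : (0:ℝ) < s ^ 2 := by positivity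
  have hBs : 0 < B / s ^ 2 := by positivity
  have hb1' := abs_le.mp hb1
  have hb2' := abs_le.mp hb2
  have hb3' := abs_le.mp hb3
  have hA1' := abs_le.mp hA1
  have hA2' := abs_le.mp hA2
  have hA0 : (0:ℝ) ≤ A := le_trans (abs_nonneg _) hA1
  have hq1 : (-B) / s ^ 2 ≤ h3 / s ^ 2 := by gcongr; exact hb3'.1
  have hq2 : h3 / s ^ 2 ≤ B / s ^ 2 := by gcongr; exact hb3'.2
  have hnd := neg_div (s ^ 2) B
  rcases le_or_gt z ζ with hz1 | hz1 <;> rcases le_or_gt z (ζ + h3 / s ^ 2) with hz2 | hz2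
  · -- z ≤ ζ, z ≤ ζ + h3/s²  : exact cancellation
    simp only [Gpt, mfn, epstil, Set.indicator_apply, mem_Iic, mem_Ioi, mem_Ioc,
      hz1, hz2, not_lt.mpr hz1, not_lt.mpr hz2, ite_true, ite_false, if_true, if_false,
      false_and, and_false, true_and, and_true, mul_zero, zero_mul, mul_one, sub_zero,
      add_zero, zero_add, neg_zero]
    refine le_trans (le_of_eq (abs_eq_zero.mpr ?_)) ?_
    · field_simp
      ring
    · refine mul_nonneg hs0.le (mul_nonneg ?_ ?_)
      · linarith [abs_nonneg (y - α), mul_nonneg hB.le (abs_nonneg (y - α)),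
          mul_nonneg hA0 hB.le, sq_nonneg B]
      · split_ifs <;> norm_num
  · -- z ≤ ζ, ζ + h3/s² < z : small interval, h3 < 0 side
    have hr1 : ζ - B / s ^ 2 < z := by linarith [hq1, hnd]
    have hr2 : z ≤ ζ + B / s ^ 2 := by linarith
    simp only [Gpt, mfn, epstil, Set.indicator_apply, mem_Iic, mem_Ioi, mem_Ioc,
      hz1, hz2, hr1, hr2, not_lt.mpr hz1, not_le.mpr hz2, ite_true, ite_false,
      if_true, if_false, false_and, and_false, true_and, and_true, and_self,
      mul_zero, zero_mul, mul_one, sub_zero, add_zero, zero_add, neg_zero]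
    refine le_trans (le_of_eq (congrArg (fun t => |t|)
      (?_ : _ = 2 * s * (y - α) * (h1 - h2) + (h2 ^ 2 - h1 ^ 2) - 2 * s * (α - β) * h2))) ?_
    · field_simp
      ring
    · rw [abs_le]
      have hae : 0 ≤ |y - α| - (y - α) := by linarith [le_abs_self (y - α)]
      have hae' : 0 ≤ |y - α| + (y - α) := by linarith [neg_abs_le (y - α)]
      have hBh1 : 0 ≤ B - h1 := by linarith
      have hBh1' : 0 ≤ B + h1 := by linarith
      have hBh2 : 0 ≤ B - h2 := by linarith
      have hBh2' : 0 ≤ B + h2 := by linarith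
      have hAab : 0 ≤ 2 * A - (α - β) := by linarith
      have hAab' : 0 ≤ 2 * A + (α - β) := by linarith
      constructor <;>
        linarith [mul_nonneg (mul_nonneg hs0.le hae) hBh1,
          mul_nonneg (mul_nonneg hs0.le hae) hBh1',
          mul_nonneg (mul_nonneg hs0.le hae') hBh1,
          mul_nonneg (mul_nonneg hs0.le hae') hBh1',
          mul_nonneg (mul_nonneg hs0.le hae) hBh2,
          mul_nonneg (mul_nonneg hs0.le hae) hBh2',
          mul_nonneg (mul_nonneg hs0.le hae') hBh2,
          mul_nonneg (mul_nonneg hs0.le hae') hBh2',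
          mul_nonneg (mul_nonneg hs0.le hAab) hBh2,
          mul_nonneg (mul_nonneg hs0.le hAab) hBh2',
          mul_nonneg (mul_nonneg hs0.le hAab') hBh2,
          mul_nonneg (mul_nonneg hs0.le hAab') hBh2',
          mul_nonneg hBh1 hBh1', mul_nonneg hBh2 hBh2',
          mul_nonneg (sub_nonneg.mpr hs) (sq_nonneg B),
          mul_nonneg (mul_nonneg (sub_nonneg.mpr hs) hB.le) (abs_nonneg (y - α)),
          sq_nonneg h1, sq_nonneg h2]
  · -- ζ < z, z ≤ ζ + h3/s² : small interval, h3 > 0 side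
    have hr1 : ζ - B / s ^ 2 < z := by linarith
    have hr2 : z ≤ ζ + B / s ^ 2 := by linarith [hq2]
    simp only [Gpt, mfn, epstil, Set.indicator_apply, mem_Iic, mem_Ioi, mem_Ioc,
      hz1, hz2, hr1, hr2, not_le.mpr hz1, not_lt.mpr hz2, ite_true, ite_false,
      if_true, if_false, false_and, and_false, true_and, and_true, and_self,
      mul_zero, zero_mul, mul_one, sub_zero, add_zero, zero_add, neg_zero]
    refine le_trans (le_of_eq (congrArg (fun t => |t|)
      (?_ : _ = 2 * s * (y - β) * (h2 - h1) + (h1 ^ 2 - h2 ^ 2) - 2 * s * (β - α) * h1))) ?_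
    · field_simp
      ring
    · rw [abs_le]
      have hae : 0 ≤ |y - β| - (y - β) := by linarith [le_abs_self (y - β)]
      have hae' : 0 ≤ |y - β| + (y - β) := by linarith [neg_abs_le (y - β)]
      have hBh1 : 0 ≤ B - h1 := by linarith
      have hBh1' : 0 ≤ B + h1 := by linarith
      have hBh2 : 0 ≤ B - h2 := by linarith
      have hBh2' : 0 ≤ B + h2 := by linarith
      have hAab : 0 ≤ 2 * A - (β - α) := by linarith
      have hAab' : 0 ≤ 2 * A + (β - α) := by linarith
      constructor <;>
        linarith [mul_nonneg (mul_nonneg hs0.le hae) hBh1,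
          mul_nonneg (mul_nonneg hs0.le hae) hBh1',
          mul_nonneg (mul_nonneg hs0.le hae') hBh1,
          mul_nonneg (mul_nonneg hs0.le hae') hBh1',
          mul_nonneg (mul_nonneg hs0.le hae) hBh2,
          mul_nonneg (mul_nonneg hs0.le hae) hBh2',
          mul_nonneg (mul_nonneg hs0.le hae') hBh2,
          mul_nonneg (mul_nonneg hs0.le hae') hBh2',
          mul_nonneg (mul_nonneg hs0.le hAab) hBh1,
          mul_nonneg (mul_nonneg hs0.le hAab) hBh1',
          mul_nonneg (mul_nonneg hs0.le hAab') hBh1,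
          mul_nonneg (mul_nonneg hs0.le hAab') hBh1',
          mul_nonneg hBh1 hBh1', mul_nonneg hBh2 hBh2',
          mul_nonneg (sub_nonneg.mpr hs) (sq_nonneg B),
          mul_nonneg (mul_nonneg (sub_nonneg.mpr hs) hB.le) (abs_nonneg (y - β)),
          sq_nonneg h1, sq_nonneg h2]
  · -- ζ < z, ζ + h3/s² < z : exact cancellation
    simp only [Gpt, mfn, epstil, Set.indicator_apply, mem_Iic, mem_Ioi, mem_Ioc,
      hz1, hz2, not_le.mpr hz1, not_le.mpr hz2, ite_true, ite_false, if_true, if_false,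
      false_and, and_false, true_and, and_true, mul_zero, zero_mul, mul_one, sub_zero,
      add_zero, zero_add, neg_zero]
    refine le_trans (le_of_eq (abs_eq_zero.mpr ?_)) ?_
    · field_simp
      ring
    · refine mul_nonneg hs0.le (mul_nonneg ?_ ?_)
      · linarith [abs_nonneg (y - β), mul_nonneg hB.le (abs_nonneg (y - β)),
          mul_nonneg hA0 hB.le, sq_nonneg B]
      · split_ifs <;> norm_num

lemma measurable_epstil (θ : ℝ × ℝ × ℝ) : Measurable (epstil θ) := by
  have : Measurable fun x : ℝ × ℝ => (if x.2 ≤ θ.2.2 then θ.1 else θ.2.1) :=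
    Measurable.ite (measurable_snd (measurableSet_Iic (a := θ.2.2)))
      measurable_const measurable_const
  exact measurable_fst.sub this

lemma ind_nonneg (u : Set ℝ) (t : ℝ) : (0:ℝ) ≤ u.indicator (fun _ => (1:ℝ)) t := by
  classical
  rw [Set.indicator_apply]; split_ifs <;> norm_num

lemma ind_le_one (u : Set ℝ) (t : ℝ) : u.indicator (fun _ => (1:ℝ)) t ≤ 1 := by
  classical
  rw [Set.indicator_apply]; split_ifs <;> norm_num


set_option maxHeartbeats 1600000 in
/-- Lemma 3.3: under (I)–(IV) and the vanishing conditions (3.4)–(3.5),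
`sup_{h ∈ K} |E*_n(h) − Ê_n(h)| → 0` in probability for every compact rectangle
`K ⊆ ℝ³`. -/
theorem stmt2
    {Ω : Type} [MeasurableSpace Ω] (P : Measure Ω) [IsProbabilityMeasure P]
    -- model parameters
    (α₀ β₀ a b ζ₀ σ2 Mbd : ℝ) (f : ℝ → ℝ)
    (νZ νε : Measure ℝ) [IsProbabilityMeasure νZ] [IsProbabilityMeasure νε]
    (ℙd : Measure (ℝ × ℝ))
    (hab : a < b) (hζ₀ : ζ₀ ∈ Icc a b) (hαβ : α₀ ≠ β₀)
    -- `Z` has a bounded density `f`, positive on `[a,b]`, bounded away from `0` near `ζ₀`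
    (hνZ : νZ = volume.withDensity (fun z => ENNReal.ofReal (f z)))
    (hfbd : ∃ C, ∀ z, f z ≤ C)
    (hfpos : ∀ z ∈ Icc a b, 0 < f z)
    (hfloc : ∃ η₀ > (0 : ℝ), ∃ κ > (0 : ℝ), ∀ z, |z - ζ₀| ≤ η₀ → κ < f z)
    (hZa : 0 < νZ (Iio a)) (hZb : 0 < νZ (Ioi b))
    -- `ε` has a continuous distribution, mean `0`, variance `σ² > 0`, finite third moment
    (hεcont : ∀ x : ℝ, νε {x} = 0)
    (hεmean : ∫ x, x ∂νε = 0)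
    (hεL2 : Integrable (fun x => x ^ 2) νε)
    (hεvar : ∫ x, x ^ 2 ∂νε = σ2) (hσ : 0 < σ2)
    (hεL3 : Integrable (fun x => |x| ^ 3) νε)
    -- `ℙd` is the law of `(Y, Z)` with `Y = α₀·1{Z≤ζ₀} + β₀·1{Z>ζ₀} + ε`, `ε ⟂ Z`
    (hℙd : ℙd = Measure.map
      (fun p : ℝ × ℝ => ((if p.1 ≤ ζ₀ then α₀ else β₀) + p.2, p.1)) (νZ.prod νε))
    -- triangular array
    (m : ℕ → ℕ) (hm1 : ∀ n, 1 ≤ m n) (hmono : Monotone m)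
    (hminf : Tendsto m atTop atTop)
    (Q : ℕ → Measure (ℝ × ℝ)) (hQprob : ∀ n, IsProbabilityMeasure (Q n))
    (hQy2 : ∀ n, Integrable (fun p : ℝ × ℝ => p.1 ^ 2) (Q n))
    (X : ℕ → ℕ → Ω → ℝ × ℝ) (hXmeas : ∀ n k, Measurable (X n k))
    (hXlaw : ∀ n k, k < m n → Measure.map (X n k) P = Q n)
    (hXindep : ∀ n, ProbabilityTheory.iIndepFun (X n) P)
    -- `θ_n` maximizes `θ ↦ Q_n(m_θ)` over `Θ = ℝ² × [a,b]`
    (θseq : ℕ → ℝ × ℝ × ℝ)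
    (hθmem : ∀ n, (θseq n).2.2 ∈ Icc a b)
    (hθmax : ∀ n, ∀ θ : ℝ × ℝ × ℝ, θ.2.2 ∈ Icc a b →
      ∫ x, mfn θ x ∂(Q n) ≤ ∫ x, mfn (θseq n) x ∂(Q n))
    (hMbd : ∀ n, |(θseq n).1| ≤ Mbd)
    -- condition (I): `‖Q_n − ℙ‖_ℱ → 0`
    (hI : ∀ ε > (0 : ℝ), ∃ N, ∀ n ≥ N, ∀ I : Set ℝ, I.OrdConnected →
      |∫ p : ℝ × ℝ, I.indicator (fun _ => (1 : ℝ)) p.2 ∂(Q n)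
        - ∫ p : ℝ × ℝ, I.indicator (fun _ => (1 : ℝ)) p.2 ∂ℙd| < ε)
    -- condition (II): `‖Q_n − ℙ‖_𝒢 → 0`
    (hII : ∀ ε > (0 : ℝ), ∃ N, ∀ n ≥ N,
      (∀ I : Set ℝ, I.OrdConnected →
        |∫ p : ℝ × ℝ, p.1 * I.indicator (fun _ => (1 : ℝ)) p.2 ∂(Q n)
          - ∫ p : ℝ × ℝ, p.1 * I.indicator (fun _ => (1 : ℝ)) p.2 ∂ℙd| < ε) ∧
      (∀ I : Set ℝ, I.OrdConnected → ∀ α : ℝ, |α| ≤ Mbd →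
        |∫ p : ℝ × ℝ, |p.1 + α| * I.indicator (fun _ => (1 : ℝ)) p.2 ∂(Q n)
          - ∫ p : ℝ × ℝ, |p.1 + α| * I.indicator (fun _ => (1 : ℝ)) p.2 ∂ℙd| < ε))
    -- condition (III): `‖Q_n − ℙ‖_ℋ → 0`
    (hIII : ∀ ε > (0 : ℝ), ∃ N, ∀ n ≥ N, ∀ I : Set ℝ, I.OrdConnected →
      |∫ p : ℝ × ℝ, p.1 ^ 2 * I.indicator (fun _ => (1 : ℝ)) p.2 ∂(Q n)
        - ∫ p : ℝ × ℝ, p.1 ^ 2 * I.indicator (fun _ => (1 : ℝ)) p.2 ∂ℙd| < ε)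
    -- condition (IV): `θ_n → θ₀`
    (hIV : Tendsto θseq atTop (nhds (α₀, β₀, ζ₀)))
    -- conditions (3.4) and (3.5): for all `δ, η > 0`,
    -- `√m_n·Q_n(|ε̃_n|^p·1{ζ_n−δ/m_n < Z ≤ ζ_n+η/m_n}) → 0` for `p = 1, 2`, and
    -- `√m_n·Q_n(1{ζ_n−δ/m_n < Z ≤ ζ_n+η/m_n}) → 0`
    (hvanish : ∀ δ > (0 : ℝ), ∀ η > (0 : ℝ),
      Tendsto (fun n => Real.sqrt (m n) *
        ∫ p : ℝ × ℝ, |epstil (θseq n) p| *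
          (Ioc ((θseq n).2.2 - δ / m n) ((θseq n).2.2 + η / m n)).indicator
            (fun _ => (1 : ℝ)) p.2 ∂(Q n)) atTop (nhds 0) ∧
      Tendsto (fun n => Real.sqrt (m n) *
        ∫ p : ℝ × ℝ, |epstil (θseq n) p| ^ 2 *
          (Ioc ((θseq n).2.2 - δ / m n) ((θseq n).2.2 + η / m n)).indicator
            (fun _ => (1 : ℝ)) p.2 ∂(Q n)) atTop (nhds 0) ∧
      Tendsto (fun n => Real.sqrt (m n) *
        ∫ p : ℝ × ℝ,
          (Ioc ((θseq n).2.2 - δ / m n) ((θseq n).2.2 + η / m n)).indicator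
            (fun _ => (1 : ℝ)) p.2 ∂(Q n)) atTop (nhds 0)) :
    -- conclusion: for every compact rectangle `K = Icc lo hi ⊆ ℝ³`,
    -- `sup_{h ∈ K} |E*_n(h) − Ê_n(h)| → 0` in probability
    ∀ lo hi : ℝ × ℝ × ℝ, ∀ ε > (0 : ℝ),
      Tendsto (fun n => P {ω | ε ≤ ⨆ h ∈ Icc lo hi,
        |Estar (m n) (X n) (θseq n) h ω - Ehat (m n) (X n) (θseq n) h ω|})
        atTop (nhds 0) := by
  intro lo hi ε hε
  classical
  set B : ℝ := |lo.1| + |hi.1| + |lo.2.1| + |hi.2.1| + |lo.2.2| + |hi.2.2| + 1 with hBdef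
  have hB : 0 < B := by rw [hBdef]; positivity
  set A : ℝ := |α₀| + |β₀| + 1 with hAdef
  have hA0 : (0:ℝ) ≤ A := by rw [hAdef]; positivity
  obtain ⟨hv1, -, hv3⟩ := hvanish B hB B hB
  set C2 : ℝ := 2 * B ^ 2 + 4 * A * B with hC2def
  have hC2 : 0 ≤ C2 := by
    rw [hC2def]
    nlinarith [sq_nonneg B, mul_nonneg hA0 hB.le]
  -- the dominating sequence
  set R : ℕ → ℝ := fun n =>
    4 * B * (Real.sqrt (m n) *
      ∫ p : ℝ × ℝ, |epstil (θseq n) p| *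
        (Ioc ((θseq n).2.2 - B / m n) ((θseq n).2.2 + B / m n)).indicator
          (fun _ => (1 : ℝ)) p.2 ∂(Q n)) +
    C2 * (Real.sqrt (m n) *
      ∫ p : ℝ × ℝ,
        (Ioc ((θseq n).2.2 - B / m n) ((θseq n).2.2 + B / m n)).indicator
          (fun _ => (1 : ℝ)) p.2 ∂(Q n)) with hRdef
  have hR0 : Tendsto R atTop (nhds 0) := by
    rw [hRdef]
    have := (hv1.const_mul (4 * B)).add (hv3.const_mul C2)
    simpa using this
  -- eventual bounds on the parameters
  have hαt : Tendsto (fun n => (θseq n).1) atTop (nhds α₀) :=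
    (continuous_fst.tendsto _).comp hIV
  have hβt : Tendsto (fun n => (θseq n).2.1) atTop (nhds β₀) :=
    ((continuous_fst.comp continuous_snd).tendsto _).comp hIV
  have hαe : ∀ᶠ n in atTop, |(θseq n).1| ≤ A :=
    (hαt.abs.eventually_lt_const (by simp only [hAdef]; linarith [abs_nonneg β₀])).mono
      fun n hn => hn.le
  have hβe : ∀ᶠ n in atTop, |(θseq n).2.1| ≤ A :=
    (hβt.abs.eventually_lt_const (by simp only [hAdef]; linarith [abs_nonneg α₀])).mono
      fun n hn => hn.le
  -- main eventual bound
  have key : ∀ᶠ n in atTop, P {ω | ε ≤ ⨆ h ∈ Icc lo hi,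
      |Estar (m n) (X n) (θseq n) h ω - Ehat (m n) (X n) (θseq n) h ω|}
        ≤ ENNReal.ofReal (R n / ε) := by
    filter_upwards [hαe, hβe] with n hα hβ
    haveI := hQprob n
    set θ := θseq n with hθdef
    set M := m n with hMdef
    have hM1 : (1:ℝ) ≤ (M:ℝ) := by exact_mod_cast hm1 n
    have hMpos : (0:ℝ) < (M:ℝ) := lt_of_lt_of_le one_pos hM1
    set s := Real.sqrt (M:ℝ) with hsdef
    have hsge : 1 ≤ s := Real.one_le_sqrt.mpr hM1
    have hs0 : 0 < s := lt_of_lt_of_le one_pos hsge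
    have hs2 : s ^ 2 = (M:ℝ) := Real.sq_sqrt hMpos.le
    set ind : ℝ × ℝ → ℝ := fun x =>
      (Ioc (θ.2.2 - B / (M:ℝ)) (θ.2.2 + B / (M:ℝ))).indicator (fun _ => (1:ℝ)) x.2
      with hinddef
    set g : ℝ × ℝ → ℝ := fun x =>
      s * ((4 * B * |epstil θ x| + C2) * ind x) with hgdef
    have hindmeas : Measurable ind :=
      (measurable_const.indicator measurableSet_Ioc).comp measurable_snd
    have hgmeas : Measurable g := by
      apply measurable_const.mul
      exact ((((measurable_epstil θ).abs.const_mul (4 * B)).add measurable_const).mul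
        hindmeas)
    have hfac : ∀ x : ℝ × ℝ, (0:ℝ) ≤ 4 * B * |epstil θ x| + C2 := by
      intro x
      have := mul_nonneg (mul_nonneg (by norm_num : (0:ℝ) ≤ 4) hB.le) (abs_nonneg (epstil θ x))
      linarith
    have hgnonneg : ∀ x, 0 ≤ g x := by
      intro x
      exact mul_nonneg hs0.le (mul_nonneg (hfac x) (ind_nonneg _ _))
    -- pointwise bound on g
    have hepsbd : ∀ x : ℝ × ℝ, |epstil θ x| ≤ |x.1| + A := by
      intro x
      simp only [epstil]
      refine (abs_sub _ _).trans ?_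
      gcongr
      split_ifs
      · exact hα
      · exact hβ
    have hgbd : ∀ x : ℝ × ℝ, g x ≤ s * (4 * B * (x.1 ^ 2 + 1 + A) + C2) := by
      intro x
      have h1 : |epstil θ x| ≤ x.1 ^ 2 + 1 + A := by
        refine (hepsbd x).trans ?_
        have : |x.1| ≤ x.1 ^ 2 + 1 := by nlinarith [sq_nonneg (|x.1| - 1), sq_abs x.1]
        linarith
      calc g x = s * ((4 * B * |epstil θ x| + C2) * ind x) := rfl
        _ ≤ s * ((4 * B * |epstil θ x| + C2) * 1) :=
            mul_le_mul_of_nonneg_left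
              (mul_le_mul_of_nonneg_left (ind_le_one _ _) (hfac x)) hs0.le
        _ = s * (4 * B * |epstil θ x| + C2) := by ring
        _ ≤ s * (4 * B * (x.1 ^ 2 + 1 + A) + C2) := by
            have h2 : 4 * B * |epstil θ x| ≤ 4 * B * (x.1 ^ 2 + 1 + A) :=
              mul_le_mul_of_nonneg_left h1 (by linarith)
            exact mul_le_mul_of_nonneg_left (add_le_add_left h2 C2) hs0.le
    -- integrability of g with respect to Q n
    have hbint : Integrable (fun x : ℝ × ℝ => s * (4 * B * (x.1 ^ 2 + 1 + A) + C2)) (Q n) := by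
      have h1 : Integrable (fun x : ℝ × ℝ => x.1 ^ 2) (Q n) := hQy2 n
      have := (h1.const_mul (s * (4 * B))).add (integrable_const (s * (4 * B * (1 + A) + C2)))
      refine this.congr (Eventually.of_forall fun x => ?_)
      simp only [Pi.add_apply]
      ring
    have hgint : Integrable g (Q n) := by
      refine Integrable.mono' hbint hgmeas.aestronglyMeasurable
        (Eventually.of_forall fun x => ?_)
      rw [Real.norm_eq_abs, abs_of_nonneg (hgnonneg x)]
      exact hgbd x
    -- the integrals of the two parts
    have hindint : Integrable ind (Q n) := by
      refine Integrable.mono' (integrable_const 1) hindmeas.aestronglyMeasurable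
        (Eventually.of_forall fun x => ?_)
      rw [Real.norm_eq_abs, abs_of_nonneg (ind_nonneg _ _)]
      exact ind_le_one _ _
    have heint : Integrable (fun x => |epstil θ x| * ind x) (Q n) := by
      have h1 : Integrable (fun x : ℝ × ℝ => x.1 ^ 2 + 1 + A) (Q n) :=
        ((hQy2 n).add (integrable_const 1)).add (integrable_const A)
      refine Integrable.mono' h1 ((measurable_epstil θ).abs.mul hindmeas).aestronglyMeasurable
        (Eventually.of_forall fun x => ?_)
      rw [Real.norm_eq_abs, abs_of_nonneg (mul_nonneg (abs_nonneg _) (ind_nonneg _ _))]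
      calc |epstil θ x| * ind x ≤ |epstil θ x| * 1 :=
            mul_le_mul_of_nonneg_left (ind_le_one _ _) (abs_nonneg _)
        _ = |epstil θ x| := mul_one _
        _ ≤ |x.1| + A := hepsbd x
        _ ≤ x.1 ^ 2 + 1 + A := by nlinarith [sq_nonneg (|x.1| - 1), sq_abs x.1]
    have hgQ : ∫ x, g x ∂(Q n) = R n := by
      have hsplit : ∀ x, g x = (s * (4 * B)) * (|epstil θ x| * ind x) + (s * C2) * ind x := by
        intro x; simp only [hgdef]; ring
      calc ∫ x, g x ∂(Q n)
          = ∫ x, ((s * (4 * B)) * (|epstil θ x| * ind x) + (s * C2) * ind x) ∂(Q n) := by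
            exact integral_congr_ae (Eventually.of_forall hsplit)
        _ = (s * (4 * B)) * ∫ x, |epstil θ x| * ind x ∂(Q n)
            + (s * C2) * ∫ x, ind x ∂(Q n) := by
            rw [integral_add (heint.const_mul _) (hindint.const_mul _),
              integral_const_mul, integral_const_mul]
        _ = R n := by
            simp only [hRdef, hinddef, hθdef, hMdef, hsdef]
            ring
    -- transfer along the sample variables
    have hXint : ∀ k < M, Integrable (fun ω => g (X n k ω)) P := by
      intro k hk
      have h1 : Integrable g (Measure.map (X n k) P) := by rw [hXlaw n k hk]; exact hgint
      exact (integrable_map_measure hgmeas.aestronglyMeasurable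
        (hXmeas n k).aemeasurable).mp h1
    have hXeq : ∀ k < M, ∫ ω, g (X n k ω) ∂P = R n := by
      intro k hk
      rw [← hgQ, ← hXlaw n k hk,
        integral_map (hXmeas n k).aemeasurable hgmeas.aestronglyMeasurable]
    -- the dominating random variable
    set S : Ω → ℝ := fun ω => ((M:ℝ))⁻¹ * ∑ k ∈ Finset.range M, g (X n k ω) with hSdef
    have hSnonneg : ∀ ω, 0 ≤ S ω := by
      intro ω
      refine mul_nonneg (by positivity) (Finset.sum_nonneg fun k _ => hgnonneg _)
    have hSint : Integrable S P := by
      refine Integrable.const_mul ?_ _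
      exact integrable_finset_sum _ fun k hk => hXint k (Finset.mem_range.mp hk)
    have hSavg : ∫ ω, S ω ∂P = R n := by
      calc ∫ ω, S ω ∂P
          = ((M:ℝ))⁻¹ * ∫ ω, ∑ k ∈ Finset.range M, g (X n k ω) ∂P := by
            rw [hSdef]; exact integral_const_mul _ _
        _ = ((M:ℝ))⁻¹ * ∑ k ∈ Finset.range M, ∫ ω, g (X n k ω) ∂P := by
            rw [integral_finset_sum _ fun k hk => hXint k (Finset.mem_range.mp hk)]
        _ = ((M:ℝ))⁻¹ * ∑ k ∈ Finset.range M, R n := by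
            rw [Finset.sum_congr rfl fun k hk => hXeq k (Finset.mem_range.mp hk)]
        _ = R n := by
            rw [Finset.sum_const, Finset.card_range, nsmul_eq_mul]
            field_simp
    -- the supremum is dominated by S
    have hsup : ∀ ω, (⨆ h ∈ Icc lo hi,
        |Estar M (X n) θ h ω - Ehat M (X n) θ h ω|) ≤ S ω := by
      intro ω
      refine Real.iSup_le (fun h => Real.iSup_le (fun hmem => ?_) (hSnonneg ω)) (hSnonneg ω)
      have hlo := Prod.le_def.mp hmem.1
      have hhi := Prod.le_def.mp hmem.2
      have hlo2 := Prod.le_def.mp hlo.2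
      have hhi2 := Prod.le_def.mp hhi.2
      have hb1 : |h.1| ≤ B := by
        rw [abs_le]
        constructor <;>
          simp only [hBdef] <;>
          linarith [le_abs_self hi.1, neg_abs_le lo.1, hlo.1, hhi.1,
            abs_nonneg lo.1, abs_nonneg hi.1, abs_nonneg lo.2.1, abs_nonneg hi.2.1,
            abs_nonneg lo.2.2, abs_nonneg hi.2.2]
      have hb2 : |h.2.1| ≤ B := by
        rw [abs_le]
        constructor <;>
          simp only [hBdef] <;>
          linarith [le_abs_self hi.2.1, neg_abs_le lo.2.1, hlo2.1, hhi2.1,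
            abs_nonneg lo.1, abs_nonneg hi.1, abs_nonneg lo.2.1, abs_nonneg hi.2.1,
            abs_nonneg lo.2.2, abs_nonneg hi.2.2]
      have hb3 : |h.2.2| ≤ B := by
        rw [abs_le]
        constructor <;>
          simp only [hBdef] <;>
          linarith [le_abs_self hi.2.2, neg_abs_le lo.2.2, hlo2.2, hhi2.2,
            abs_nonneg lo.1, abs_nonneg hi.1, abs_nonneg lo.2.1, abs_nonneg hi.2.1,
            abs_nonneg lo.2.2, abs_nonneg hi.2.2]
      rw [Estar_sub_Ehat]
      calc |((M:ℝ))⁻¹ * ∑ k ∈ Finset.range M, Gpt (Real.sqrt (M:ℝ)) ((M:ℝ)) θ h (X n k ω)|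
          = ((M:ℝ))⁻¹ * |∑ k ∈ Finset.range M, Gpt (Real.sqrt (M:ℝ)) ((M:ℝ)) θ h (X n k ω)| := by
            rw [abs_mul, abs_of_nonneg (by positivity : (0:ℝ) ≤ ((M:ℝ))⁻¹)]
        _ ≤ ((M:ℝ))⁻¹ * ∑ k ∈ Finset.range M,
              |Gpt (Real.sqrt (M:ℝ)) ((M:ℝ)) θ h (X n k ω)| := by
            gcongr
            exact Finset.abs_sum_le_sum_abs _ _
        _ ≤ ((M:ℝ))⁻¹ * ∑ k ∈ Finset.range M, g (X n k ω) := by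
            gcongr with k hk
            have hbd := Gpt_bd A B s θ h (X n k ω) hsge hB hb1 hb2 hb3 hα hβ
            rw [hs2] at hbd
            exact hbd
        _ = S ω := rfl
    -- Markov's inequality
    have hsub : {ω | ε ≤ ⨆ h ∈ Icc lo hi,
        |Estar M (X n) θ h ω - Ehat M (X n) θ h ω|} ⊆ {ω | ε ≤ S ω} :=
      fun ω hω => le_trans hω (hsup ω)
    have hmarkov := mul_meas_ge_le_integral_of_nonneg
      (Eventually.of_forall hSnonneg) hSint ε
    have htoReal : (P {ω | ε ≤ S ω}).toReal ≤ R n / ε := by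
      rw [le_div_iff₀ hε]
      calc (P {ω | ε ≤ S ω}).toReal * ε = ε * (P {ω | ε ≤ S ω}).toReal := mul_comm _ _
        _ ≤ ∫ ω, S ω ∂P := hmarkov
        _ = R n := hSavg
    calc P {ω | ε ≤ ⨆ h ∈ Icc lo hi, |Estar M (X n) θ h ω - Ehat M (X n) θ h ω|}
        ≤ P {ω | ε ≤ S ω} := measure_mono hsub
      _ = ENNReal.ofReal ((P {ω | ε ≤ S ω}).toReal) :=
          (ENNReal.ofReal_toReal (measure_ne_top P _)).symm
      _ ≤ ENNReal.ofReal (R n / ε) := ENNReal.ofReal_le_ofReal htoReal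
  -- conclude by squeezing
  have hlim : Tendsto (fun n => ENNReal.ofReal (R n / ε)) atTop (nhds 0) := by
    have h1 : Tendsto (fun n => R n / ε) atTop (nhds 0) := by
      simpa using hR0.div_const ε
    have := ENNReal.tendsto_ofReal h1
    simpa using this
  exact tendsto_of_tendsto_of_tendsto_of_le_of_le' tendsto_const_nhds hlim
    (Eventually.of_forall fun n => zero_le) key
end
end

section
/- For every compact rectangle K ⊂ Θ, sup_{θ∈K} |M_n(θ) − M(θ)| → 0 almost surely as n → ∞. (Lemma 4.1(i): uniform almost-sure convergence of the empirical criterion.) -/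
open MeasureTheory Filter Set

noncomputable section

open Topology

lemma polya {F : ℕ → ℝ → ℝ} {G : ℝ → ℝ} (hFmono : ∀ n, Monotone (F n))
    (hG : Continuous G)
    (hconv : ∀ q : ℚ, Tendsto (fun n => F n (q : ℝ)) atTop (𝓝 (G (q : ℝ))))
    (c d : ℝ) : TendstoUniformlyOn F G atTop (Icc c d) := by
  rcases lt_or_ge d c with hdc | hcd
  · rw [Icc_eq_empty (not_le.2 hdc)]; exact tendstoUniformlyOn_empty
  rw [Metric.tendstoUniformlyOn_iff]
  intro ε hε
  obtain ⟨δ, hδ0, hδ⟩ := Metric.uniformContinuousOn_iff.1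
    ((isCompact_Icc (a := c - 1) (b := d + 1)).uniformContinuousOn_of_continuous
      hG.continuousOn) (ε / 3) (by linarith)
  obtain ⟨r, hr0, hr⟩ := exists_rat_btwn (lt_min hδ0 one_pos)
  rw [lt_min_iff] at hr
  have hr0' : (0:ℝ) < (r:ℝ) := by exact_mod_cast hr0
  obtain ⟨q₀, hq₀1, hq₀2⟩ := exists_rat_btwn (show c - 1 < c by linarith)
  set J : ℕ := ⌊(d - (q₀:ℝ)) / r⌋₊ with hJ
  set qg : ℕ → ℚ := fun j => q₀ + j * r with hqg
  have hqgcast : ∀ j : ℕ, ((qg j : ℚ) : ℝ) = (q₀:ℝ) + j * r := by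
    intro j; push_cast [hqg]; ring
  -- grid points lie in [c-1, d+1]
  have hgrid_mem : ∀ j ≤ J + 1, ((qg j : ℚ) : ℝ) ∈ Icc (c-1) (d+1) := by
    intro j hj
    rw [hqgcast]
    constructor
    · nlinarith [Nat.cast_nonneg (α := ℝ) j]
    · have h1 : (j:ℝ) * r ≤ (J+1 : ℕ) * r := by
        apply mul_le_mul_of_nonneg_right _ hr0'.le
        exact_mod_cast Nat.cast_le.2 hj
      have h2 : (J:ℝ) * r ≤ d - q₀ := by
        have := Nat.floor_le (div_nonneg (show (0:ℝ) ≤ d - q₀ by linarith) hr0'.le)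
        calc (J:ℝ) * r ≤ ((d - (q₀:ℝ)) / r) * r := by
              apply mul_le_mul_of_nonneg_right this hr0'.le
          _ = d - q₀ := by field_simp
      push_cast at h1 ⊢
      nlinarith [hr.2]
  -- eventually all grid values are close
  have hev : ∀ᶠ n in atTop, ∀ j ∈ Finset.range (J + 2),
      dist (F n ((qg j : ℚ) : ℝ)) (G ((qg j : ℚ) : ℝ)) < ε / 3 := by
    rw [Filter.eventually_all_finset]
    intro j _
    exact (hconv (qg j)) (Metric.ball_mem_nhds _ (by linarith))
  filter_upwards [hev] with n hn x hx
  -- locate x in the grid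
  have hxq₀ : (q₀:ℝ) < x := lt_of_lt_of_le hq₀2 hx.1
  set j : ℕ := ⌊(x - (q₀:ℝ)) / r⌋₊ with hj
  have hjle : (j:ℝ) * r ≤ x - q₀ := by
    have := Nat.floor_le (div_nonneg (show (0:ℝ) ≤ x - q₀ by linarith) hr0'.le)
    calc (j:ℝ) * r ≤ ((x - (q₀:ℝ)) / r) * r :=
          mul_le_mul_of_nonneg_right this hr0'.le
      _ = x - q₀ := by field_simp
  have hjlt : x - (q₀:ℝ) < (j+1 : ℝ) * r := by
    have := Nat.lt_succ_floor ((x - (q₀:ℝ)) / r)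
    have h2 : (x - (q₀:ℝ)) / r < (j:ℝ) + 1 := by exact_mod_cast this
    calc x - (q₀:ℝ) = ((x - (q₀:ℝ)) / r) * r := by field_simp
      _ < ((j:ℝ) + 1) * r := by
          apply mul_lt_mul_of_pos_right h2 hr0'
  have hjJ : j ≤ J := by
    apply Nat.floor_le_floor
    gcongr
    linarith [hx.2]
  -- grid bracketing values
  have hmemj : j ∈ Finset.range (J+2) := Finset.mem_range.2 (by omega)
  have hmemj1 : j+1 ∈ Finset.range (J+2) := Finset.mem_range.2 (by omega)
  have hFj := hn j hmemj
  have hFj1 := hn (j+1) hmemj1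
  have hxmem : x ∈ Icc (c-1) (d+1) := ⟨by linarith [hx.1], by linarith [hx.2]⟩
  have hgj := hgrid_mem j (by omega)
  have hgj1 := hgrid_mem (j+1) (by omega)
  -- G close at both grid pts
  have hGj : dist (G ((qg j : ℚ) : ℝ)) (G x) < ε / 3 := by
    apply hδ _ hgj _ hxmem
    rw [Real.dist_eq, hqgcast, abs_lt]
    constructor <;> nlinarith [hr.1]
  have hGj1 : dist (G ((qg (j+1) : ℚ) : ℝ)) (G x) < ε / 3 := by
    apply hδ _ hgj1 _ hxmem
    rw [Real.dist_eq, hqgcast, abs_lt]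
    push_cast
    constructor <;> nlinarith [hr.1]
  have hmono1 : F n x ≤ F n ((qg (j+1) : ℚ) : ℝ) := by
    apply hFmono n
    rw [hqgcast]; push_cast; linarith
  have hmono2 : F n ((qg j : ℚ) : ℝ) ≤ F n x := by
    apply hFmono n
    rw [hqgcast]; linarith
  rw [Real.dist_eq, abs_sub_lt_iff]
  rw [Real.dist_eq, abs_sub_lt_iff] at hFj hFj1 hGj hGj1
  constructor <;> linarith

lemma slln_comp {Ω : Type} [MeasurableSpace Ω] {P : Measure Ω} [IsProbabilityMeasure P]
    {ℙd : Measure (ℝ × ℝ)} {Xd : ℕ → Ω → ℝ × ℝ} (hXdMeas : ∀ i, Measurable (Xd i))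
    (hXdLaw : ∀ i, Measure.map (Xd i) P = ℙd)
    (hXdIndep : ProbabilityTheory.iIndepFun Xd P)
    {g : ℝ × ℝ → ℝ} (hg : Measurable g) (hgint : Integrable g ℙd) :
    ∀ᵐ ω ∂P, Tendsto (fun n : ℕ => (n:ℝ)⁻¹ * ∑ i ∈ Finset.range n, g (Xd i ω))
      atTop (𝓝 (∫ x, g x ∂ℙd)) := by
  have hint : Integrable (fun ω => g (Xd 0 ω)) P := by
    rw [← hXdLaw 0] at hgint
    exact (integrable_map_measure hg.aestronglyMeasurable (hXdMeas 0).aemeasurable).mp hgint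
  have hindep : Pairwise (Function.onFun (ProbabilityTheory.IndepFun · · P) (fun i ω => g (Xd i ω))) := by
    intro i j hij
    exact (hXdIndep.indepFun hij).comp hg hg
  have hident : ∀ i, ProbabilityTheory.IdentDistrib (fun ω => g (Xd i ω))
      (fun ω => g (Xd 0 ω)) P P := by
    intro i
    refine ⟨(hg.comp (hXdMeas i)).aemeasurable, (hg.comp (hXdMeas 0)).aemeasurable, ?_⟩
    show Measure.map (g ∘ Xd i) P = Measure.map (g ∘ Xd 0) P
    rw [← Measure.map_map hg (hXdMeas i), ← Measure.map_map hg (hXdMeas 0), hXdLaw i, hXdLaw 0]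
  have h := ProbabilityTheory.strong_law_ae (E := ℝ) _ hint hindep hident
  have hI : ∫ ω, g (Xd 0 ω) ∂P = ∫ x, g x ∂ℙd := by
    rw [← hXdLaw 0, integral_map (hXdMeas 0).aemeasurable hg.aestronglyMeasurable]
  filter_upwards [h] with ω hω
  rw [hI] at hω
  simpa [smul_eq_mul] using hω

lemma cont_wcdf {ℙd : Measure (ℝ × ℝ)} [IsFiniteMeasure ℙd] {w : ℝ × ℝ → ℝ}
    (hw : Integrable w ℙd)
    (h0 : ∀ ζ : ℝ, ℙd {x | x.2 = ζ} = 0) :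
    Continuous (fun ζ => ∫ x, w x * (if x.2 ≤ ζ then (1:ℝ) else 0) ∂ℙd) := by
  rw [continuous_iff_continuousAt]
  intro ζ
  have hmeas : ∀ ζ' : ℝ, AEStronglyMeasurable
      (fun x : ℝ × ℝ => w x * (if x.2 ≤ ζ' then (1:ℝ) else 0)) ℙd := by
    intro ζ'
    exact hw.1.mul ((Measurable.ite (measurableSet_le measurable_snd measurable_const)
      measurable_const measurable_const).aestronglyMeasurable)
  apply tendsto_integral_filter_of_dominated_convergence (fun x => |w x|)
  · exact .of_forall hmeas
  · refine .of_forall fun ζ' => .of_forall fun x => ?_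
    rw [norm_mul, Real.norm_eq_abs, Real.norm_eq_abs]
    rcases le_or_gt x.2 ζ' with h | h
    · simp [h]
    · simp [not_le.2 h, abs_nonneg]
  · exact hw.abs
  · have hae : ∀ᵐ x ∂ℙd, x.2 ≠ ζ := by
      rw [ae_iff]
      convert h0 ζ using 2
      simp
    filter_upwards [hae] with x hx
    rcases lt_or_gt_of_ne hx with h | h
    · have hev : ∀ᶠ ζ' in 𝓝 ζ, x.2 ≤ ζ' := by
        filter_upwards [Ioi_mem_nhds h] with ζ' h' using h'.le
      rw [if_pos h.le]
      apply Tendsto.congr' _ tendsto_const_nhds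
      filter_upwards [hev] with ζ' h' using by rw [if_pos h']
    · have hev : ∀ᶠ ζ' in 𝓝 ζ, ¬ x.2 ≤ ζ' := by
        filter_upwards [Iio_mem_nhds h] with ζ' h' using not_le.2 h'
      rw [if_neg (not_le.2 h)]
      apply Tendsto.congr' _ tendsto_const_nhds
      filter_upwards [hev] with ζ' h' using by rw [if_neg h']

lemma abs_le_one_add_sq (t : ℝ) : |t| ≤ 1 + t ^ 2 := by
  nlinarith [sq_nonneg (|t| - 1), sq_abs t, abs_nonneg t]

lemma mfn_eq (θ : ℝ × ℝ × ℝ) (x : ℝ × ℝ) :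
    mfn θ x = 2*θ.2.1*x.1 - x.1^2 - θ.2.1^2
      + 2*(θ.1-θ.2.1) * (max x.1 0 * (if x.2 ≤ θ.2.2 then (1:ℝ) else 0))
      - 2*(θ.1-θ.2.1) * (max (-x.1) 0 * (if x.2 ≤ θ.2.2 then (1:ℝ) else 0))
      - (θ.1^2-θ.2.1^2) * ((1:ℝ) * (if x.2 ≤ θ.2.2 then (1:ℝ) else 0)) := by
  have hy := max_zero_sub_max_neg_zero_eq_self x.1
  by_cases h : x.2 ≤ θ.2.2
  · simp only [mfn, if_pos h]
    linear_combination (-2*(θ.1-θ.2.1)) * hy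
  · simp only [mfn, if_neg h]
    ring

set_option maxHeartbeats 2000000 in
/-- Lemma 4.1(i): for every compact rectangle `K = Icc lo hi ⊆ Θ`,
`sup_{θ ∈ K} |M_n(θ) − M(θ)| → 0` almost surely (uniform convergence on `K`). -/
theorem stmt6
    {Ω : Type} [MeasurableSpace Ω] (P : Measure Ω) [IsProbabilityMeasure P]
    -- model parameters
    (α₀ β₀ a b ζ₀ σ2 Mbd : ℝ) (f : ℝ → ℝ)
    (νZ νε : Measure ℝ) [IsProbabilityMeasure νZ] [IsProbabilityMeasure νε]
    (ℙd : Measure (ℝ × ℝ))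
    (hab : a < b) (hζ₀ : ζ₀ ∈ Icc a b) (hαβ : α₀ ≠ β₀)
    -- `Z` has a bounded density `f`, positive on `[a,b]`, bounded away from `0` near `ζ₀`
    (hνZ : νZ = volume.withDensity (fun z => ENNReal.ofReal (f z)))
    (hfbd : ∃ C, ∀ z, f z ≤ C)
    (hfpos : ∀ z ∈ Icc a b, 0 < f z)
    (hfloc : ∃ η₀ > (0 : ℝ), ∃ κ > (0 : ℝ), ∀ z, |z - ζ₀| ≤ η₀ → κ < f z)
    (hZa : 0 < νZ (Iio a)) (hZb : 0 < νZ (Ioi b))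
    -- `ε` has a continuous distribution, mean `0`, variance `σ² > 0`, finite third moment
    (hεcont : ∀ x : ℝ, νε {x} = 0)
    (hεmean : ∫ x, x ∂νε = 0)
    (hεL2 : Integrable (fun x => x ^ 2) νε)
    (hεvar : ∫ x, x ^ 2 ∂νε = σ2) (hσ : 0 < σ2)
    (hεL3 : Integrable (fun x => |x| ^ 3) νε)
    -- `ℙd` is the law of `(Y, Z)` with `Y = α₀·1{Z≤ζ₀} + β₀·1{Z>ζ₀} + ε`, `ε ⟂ Z`
    (hℙd : ℙd = Measure.map
      (fun p : ℝ × ℝ => ((if p.1 ≤ ζ₀ then α₀ else β₀) + p.2, p.1)) (νZ.prod νε))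
    -- i.i.d. data `(X_i) = (Y_i, Z_i)` with law `ℙd`
    (Xd : ℕ → Ω → ℝ × ℝ) (hXdMeas : ∀ i, Measurable (Xd i))
    (hXdLaw : ∀ i, Measure.map (Xd i) P = ℙd)
    (hXdIndep : ProbabilityTheory.iIndepFun Xd P) :
    -- conclusion: uniform a.s. convergence of `M_n` to `M` on compact rectangles of `Θ`
    ∀ lo hi : ℝ × ℝ × ℝ, (∀ θ ∈ Icc lo hi, θ.2.2 ∈ Icc a b) →
      ∀ᵐ ω ∂P, TendstoUniformlyOn
        (fun (n : ℕ) (θ : ℝ × ℝ × ℝ) => (n : ℝ)⁻¹ * ∑ i ∈ Finset.range n, mfn θ (Xd i ω))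
        (fun θ => ∫ x, mfn θ x ∂ℙd) atTop (Icc lo hi) := by
  intro lo hi _hsub
  set T : ℝ × ℝ → ℝ × ℝ := fun p => ((if p.1 ≤ ζ₀ then α₀ else β₀) + p.2, p.1) with hTdef
  have hb0 : Measurable (fun p : ℝ × ℝ => if p.1 ≤ ζ₀ then α₀ else β₀) :=
    Measurable.ite (measurableSet_le measurable_fst measurable_const)
      measurable_const measurable_const
  have hT : Measurable T := (hb0.add measurable_snd).prodMk measurable_fst
  haveI hPprob : IsProbabilityMeasure ℙd := by
    rw [hℙd]; exact Measure.isProbabilityMeasure_map hT.aemeasurable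
  have h0 : ∀ ζ : ℝ, ℙd {x : ℝ × ℝ | x.2 = ζ} = 0 := by
    intro ζ
    show ℙd (Prod.snd ⁻¹' {ζ}) = 0
    rw [hℙd, Measure.map_apply hT (measurable_snd (measurableSet_singleton ζ))]
    have hpre : T ⁻¹' (Prod.snd ⁻¹' {ζ}) = ({ζ} : Set ℝ) ×ˢ (univ : Set ℝ) := by
      ext ⟨p1, p2⟩; simp [hTdef, eq_comm]
    rw [hpre, Measure.prod_prod]
    have hz : νZ {ζ} = 0 := by
      rw [hνZ]
      exact (withDensity_absolutelyContinuous volume _) Real.volume_singleton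
    rw [hz, zero_mul]
  -- integrability of the basic statistics under ℙd
  have hI2 : Integrable (fun x : ℝ × ℝ => x.1 ^ 2) ℙd := by
    rw [hℙd, integrable_map_measure ((measurable_fst.pow_const 2).aestronglyMeasurable)
      hT.aemeasurable]
    have hsnd : Integrable (fun p : ℝ × ℝ => p.2 ^ 2) (νZ.prod νε) := by
      have hmap : Measure.map Prod.snd (νZ.prod νε) = νε := by
        rw [Measure.map_snd_prod, measure_univ, one_smul]
      exact (integrable_map_measure ((measurable_id.pow_const 2).aestronglyMeasurable)
        measurable_snd.aemeasurable (μ := νZ.prod νε)).1 (by rwa [hmap])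
    apply Integrable.mono'
      ((integrable_const (2 * (|α₀| + |β₀|) ^ 2)).add (hsnd.const_mul 2))
    · exact ((hb0.add measurable_snd).pow_const 2).aestronglyMeasurable
    · refine ae_of_all _ fun p => ?_
      have hb : |if p.1 ≤ ζ₀ then α₀ else β₀| ≤ |α₀| + |β₀| := by
        by_cases h : p.1 ≤ ζ₀
        · rw [if_pos h]; exact le_add_of_nonneg_right (abs_nonneg _)
        · rw [if_neg h]; exact le_add_of_nonneg_left (abs_nonneg _)
      show ‖((if p.1 ≤ ζ₀ then α₀ else β₀) + p.2) ^ 2‖ ≤ 2 * (|α₀| + |β₀|) ^ 2 + 2 * p.2 ^ 2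
      rw [Real.norm_eq_abs, abs_of_nonneg (sq_nonneg _)]
      nlinarith [sq_nonneg ((if p.1 ≤ ζ₀ then α₀ else β₀) - p.2),
        sq_abs (if p.1 ≤ ζ₀ then α₀ else β₀), abs_nonneg (if p.1 ≤ ζ₀ then α₀ else β₀)]
  have hbnd : Integrable (fun x : ℝ × ℝ => 1 + x.1 ^ 2) ℙd := (integrable_const 1).add hI2
  have hI1 : Integrable (fun x : ℝ × ℝ => x.1) ℙd := by
    apply Integrable.mono' hbnd measurable_fst.aestronglyMeasurable
    exact ae_of_all _ fun x => by rw [Real.norm_eq_abs]; exact abs_le_one_add_sq _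
  have hind : ∀ ζ : ℝ, Measurable (fun x : ℝ × ℝ => if x.2 ≤ ζ then (1:ℝ) else 0) :=
    fun ζ => Measurable.ite (measurableSet_le measurable_snd measurable_const)
      measurable_const measurable_const
  have hIwp : Integrable (fun x : ℝ × ℝ => max x.1 0) ℙd := by
    apply Integrable.mono' hbnd (measurable_fst.max measurable_const).aestronglyMeasurable
    refine ae_of_all _ fun x => ?_
    rw [Real.norm_eq_abs]
    calc |max x.1 0| ≤ |x.1| := by
          rcases le_or_gt x.1 0 with h | h
          · rw [max_eq_right h]; simp [abs_nonneg]
          · rw [max_eq_left h.le]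
      _ ≤ 1 + x.1 ^ 2 := abs_le_one_add_sq _
  have hIwm : Integrable (fun x : ℝ × ℝ => max (-x.1) 0) ℙd := by
    apply Integrable.mono' hbnd
      (measurable_fst.neg.max measurable_const).aestronglyMeasurable
    refine ae_of_all _ fun x => ?_
    rw [Real.norm_eq_abs]
    calc |max (-x.1) 0| ≤ |(-x.1)| := by
          rcases le_or_gt (-x.1) 0 with h | h
          · rw [max_eq_right h]; simp [abs_nonneg]
          · rw [max_eq_left h.le]
      _ = |x.1| := abs_neg _
      _ ≤ 1 + x.1 ^ 2 := abs_le_one_add_sq _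
  have hIp : ∀ ζ : ℝ, Integrable (fun x : ℝ × ℝ =>
      max x.1 0 * (if x.2 ≤ ζ then (1:ℝ) else 0)) ℙd := by
    intro ζ
    apply Integrable.mono' hIwp
      ((measurable_fst.max measurable_const).mul (hind ζ)).aestronglyMeasurable
    refine ae_of_all _ fun x => ?_
    rw [Real.norm_eq_abs, Pi.mul_apply, abs_mul]
    rcases le_or_gt x.2 ζ with h | h
    · rw [if_pos h]; simp [abs_of_nonneg (le_max_right x.1 0)]
    · rw [if_neg (not_le.2 h)]; simp [le_max_right]
  have hIm : ∀ ζ : ℝ, Integrable (fun x : ℝ × ℝ =>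
      max (-x.1) 0 * (if x.2 ≤ ζ then (1:ℝ) else 0)) ℙd := by
    intro ζ
    apply Integrable.mono' hIwm
      ((measurable_fst.neg.max measurable_const).mul (hind ζ)).aestronglyMeasurable
    refine ae_of_all _ fun x => ?_
    rw [Real.norm_eq_abs, Pi.mul_apply, abs_mul]
    rcases le_or_gt x.2 ζ with h | h
    · rw [if_pos h]; simp [abs_of_nonneg (le_max_right (-x.1) 0)]
    · rw [if_neg (not_le.2 h)]; simp [le_max_right]
  have hIi : ∀ ζ : ℝ, Integrable (fun x : ℝ × ℝ =>
      (1:ℝ) * (if x.2 ≤ ζ then (1:ℝ) else 0)) ℙd := by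
    intro ζ
    apply Integrable.mono' (integrable_const (1:ℝ))
      (measurable_const.mul (hind ζ)).aestronglyMeasurable
    refine ae_of_all _ fun x => ?_
    rw [Real.norm_eq_abs, Pi.mul_apply, one_mul]
    rcases le_or_gt x.2 ζ with h | h
    · rw [if_pos h]; norm_num
    · rw [if_neg (not_le.2 h)]; norm_num
  -- the a.s. good event
  have hae2 := slln_comp hXdMeas hXdLaw hXdIndep (measurable_fst.pow_const 2) hI2
  have hae1 := slln_comp hXdMeas hXdLaw hXdIndep measurable_fst hI1
  have haep : ∀ᵐ ω ∂P, ∀ q : ℚ,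
      Tendsto (fun n : ℕ => (n:ℝ)⁻¹ * ∑ i ∈ Finset.range n,
        (max (Xd i ω).1 0 * (if (Xd i ω).2 ≤ (q:ℝ) then (1:ℝ) else 0)))
      atTop (𝓝 (∫ x, max x.1 0 * (if x.2 ≤ (q:ℝ) then (1:ℝ) else 0) ∂ℙd)) :=
    ae_all_iff.2 fun q => slln_comp hXdMeas hXdLaw hXdIndep
      ((measurable_fst.max measurable_const).mul (hind q)) (hIp q)
  have haem : ∀ᵐ ω ∂P, ∀ q : ℚ,
      Tendsto (fun n : ℕ => (n:ℝ)⁻¹ * ∑ i ∈ Finset.range n,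
        (max (-(Xd i ω).1) 0 * (if (Xd i ω).2 ≤ (q:ℝ) then (1:ℝ) else 0)))
      atTop (𝓝 (∫ x, max (-x.1) 0 * (if x.2 ≤ (q:ℝ) then (1:ℝ) else 0) ∂ℙd)) :=
    ae_all_iff.2 fun q => slln_comp hXdMeas hXdLaw hXdIndep
      ((measurable_fst.neg.max measurable_const).mul (hind q)) (hIm q)
  have haei : ∀ᵐ ω ∂P, ∀ q : ℚ,
      Tendsto (fun n : ℕ => (n:ℝ)⁻¹ * ∑ i ∈ Finset.range n,
        ((1:ℝ) * (if (Xd i ω).2 ≤ (q:ℝ) then (1:ℝ) else 0)))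
      atTop (𝓝 (∫ x, (1:ℝ) * (if x.2 ≤ (q:ℝ) then (1:ℝ) else 0) ∂ℙd)) :=
    ae_all_iff.2 fun q => slln_comp hXdMeas hXdLaw hXdIndep
      (measurable_const.mul (hind q)) (hIi q)
  filter_upwards [hae2, hae1, haep, haem, haei] with ω h2 h1 hp hm hi1
  -- uniform convergence of the three monotone families on [lo.2.2, hi.2.2]
  have hmono : ∀ (w : ℝ × ℝ → ℝ), (∀ x, 0 ≤ w x) → ∀ n : ℕ, Monotone (fun ζ =>
      (n:ℝ)⁻¹ * ∑ i ∈ Finset.range n, (w (Xd i ω) * (if (Xd i ω).2 ≤ ζ then (1:ℝ) else 0))) := by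
    intro w hw n ζ ζ' hζ
    apply mul_le_mul_of_nonneg_left _ (by positivity)
    apply Finset.sum_le_sum
    intro i _
    apply mul_le_mul_of_nonneg_left _ (hw _)
    by_cases hx : (Xd i ω).2 ≤ ζ
    · rw [if_pos hx, if_pos (hx.trans hζ)]
    · rw [if_neg hx]; positivity
  have hup : TendstoUniformlyOn
      (fun (n : ℕ) (ζ : ℝ) => (n:ℝ)⁻¹ * ∑ i ∈ Finset.range n,
        (max (Xd i ω).1 0 * (if (Xd i ω).2 ≤ ζ then (1:ℝ) else 0)))
      (fun ζ => ∫ x, max x.1 0 * (if x.2 ≤ ζ then (1:ℝ) else 0) ∂ℙd)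
      atTop (Icc lo.2.2 hi.2.2) :=
    polya (hmono (fun x : ℝ × ℝ => max x.1 0) (fun x => le_max_right _ _)) (cont_wcdf hIwp h0) hp _ _
  have hum : TendstoUniformlyOn
      (fun (n : ℕ) (ζ : ℝ) => (n:ℝ)⁻¹ * ∑ i ∈ Finset.range n,
        (max (-(Xd i ω).1) 0 * (if (Xd i ω).2 ≤ ζ then (1:ℝ) else 0)))
      (fun ζ => ∫ x, max (-x.1) 0 * (if x.2 ≤ ζ then (1:ℝ) else 0) ∂ℙd)
      atTop (Icc lo.2.2 hi.2.2) :=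
    polya (hmono (fun x : ℝ × ℝ => max (-x.1) 0) (fun x => le_max_right _ _)) (cont_wcdf hIwm h0) hm _ _
  have hui : TendstoUniformlyOn
      (fun (n : ℕ) (ζ : ℝ) => (n:ℝ)⁻¹ * ∑ i ∈ Finset.range n,
        ((1:ℝ) * (if (Xd i ω).2 ≤ ζ then (1:ℝ) else 0)))
      (fun ζ => ∫ x, (1:ℝ) * (if x.2 ≤ ζ then (1:ℝ) else 0) ∂ℙd)
      atTop (Icc lo.2.2 hi.2.2) :=
    polya (hmono (fun _ : ℝ × ℝ => (1:ℝ)) (fun _ => zero_le_one)) (cont_wcdf (integrable_const 1) h0) hi1 _ _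
  -- conclude
  rw [Metric.tendstoUniformlyOn_iff]
  intro ε hε
  set B : ℝ := |lo.1| + |hi.1| + |lo.2.1| + |hi.2.1| + 1 with hB
  have hB1 : 1 ≤ B := by
    rw [hB]
    nlinarith [abs_nonneg lo.1, abs_nonneg hi.1, abs_nonneg lo.2.1, abs_nonneg hi.2.1]
  set C : ℝ := 1 + 10*B + 2*B^2 with hC
  have hC0 : 0 < C := by positivity
  set ε' : ℝ := ε / C with hε'def
  have hε'0 : 0 < ε' := div_pos hε hC0
  have hsum : ε' + 2*B*ε' + 4*B*ε' + 4*B*ε' + 2*B^2*ε' = ε := by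
    rw [hε'def]; field_simp; ring
  have hev2 := h2 (Metric.ball_mem_nhds _ hε'0)
  have hev1 := h1 (Metric.ball_mem_nhds _ hε'0)
  have hevp := Metric.tendstoUniformlyOn_iff.1 hup ε' hε'0
  have hevm := Metric.tendstoUniformlyOn_iff.1 hum ε' hε'0
  have hevi := Metric.tendstoUniformlyOn_iff.1 hui ε' hε'0
  filter_upwards [hev2, hev1, hevp, hevm, hevi, eventually_ge_atTop 1]
    with n h2n h1n hpn hmn hin hn1
  intro θ hθ
  simp only [Set.mem_Icc, Prod.le_def] at hθ
  obtain ⟨⟨hlo1, hlo21, hlo22⟩, ⟨hhi1, hhi21, hhi22⟩⟩ := hθ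
  have hζmem : θ.2.2 ∈ Icc lo.2.2 hi.2.2 := ⟨hlo22, hhi22⟩
  have hαB : |θ.1| ≤ B := by
    rw [abs_le]
    constructor <;> [nlinarith [neg_abs_le lo.1, le_abs_self lo.1, abs_nonneg hi.1,
      abs_nonneg lo.2.1, abs_nonneg hi.2.1];
      nlinarith [le_abs_self hi.1, abs_nonneg lo.1, abs_nonneg lo.2.1, abs_nonneg hi.2.1]]
  have hβB : |θ.2.1| ≤ B := by
    rw [abs_le]
    constructor <;> [nlinarith [neg_abs_le lo.2.1, abs_nonneg lo.1, abs_nonneg hi.1,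
      abs_nonneg hi.2.1];
      nlinarith [le_abs_self hi.2.1, abs_nonneg lo.1, abs_nonneg hi.1, abs_nonneg lo.2.1]]
  -- notation for the basic statistics
  set S2 : ℝ := (n:ℝ)⁻¹ * ∑ i ∈ Finset.range n, ((Xd i ω).1)^2 with hS2
  set S1 : ℝ := (n:ℝ)⁻¹ * ∑ i ∈ Finset.range n, (Xd i ω).1 with hS1
  set Sp : ℝ := (n:ℝ)⁻¹ * ∑ i ∈ Finset.range n,
    (max (Xd i ω).1 0 * (if (Xd i ω).2 ≤ θ.2.2 then (1:ℝ) else 0)) with hSp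
  set Sm : ℝ := (n:ℝ)⁻¹ * ∑ i ∈ Finset.range n,
    (max (-(Xd i ω).1) 0 * (if (Xd i ω).2 ≤ θ.2.2 then (1:ℝ) else 0)) with hSm
  set Si : ℝ := (n:ℝ)⁻¹ * ∑ i ∈ Finset.range n,
    ((1:ℝ) * (if (Xd i ω).2 ≤ θ.2.2 then (1:ℝ) else 0)) with hSi
  set μ2 : ℝ := ∫ x, x.1^2 ∂ℙd with hμ2
  set μ1 : ℝ := ∫ x, x.1 ∂ℙd with hμ1
  set Gp : ℝ := ∫ x, max x.1 0 * (if x.2 ≤ θ.2.2 then (1:ℝ) else 0) ∂ℙd with hGp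
  set Gm : ℝ := ∫ x, max (-x.1) 0 * (if x.2 ≤ θ.2.2 then (1:ℝ) else 0) ∂ℙd with hGm
  set Gi : ℝ := ∫ x, (1:ℝ) * (if x.2 ≤ θ.2.2 then (1:ℝ) else 0) ∂ℙd with hGi
  -- the decomposition of the limit criterion
  have hM : ∫ x, mfn θ x ∂ℙd
      = 2*θ.2.1*μ1 - μ2 - θ.2.1^2 + 2*(θ.1-θ.2.1) * Gp - 2*(θ.1-θ.2.1) * Gm
        - (θ.1^2-θ.2.1^2) * Gi := by
    have iA : Integrable (fun x : ℝ × ℝ => 2*θ.2.1*x.1) ℙd := hI1.const_mul _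
    have iAB : Integrable (fun x : ℝ × ℝ => 2*θ.2.1*x.1 - x.1^2) ℙd := iA.sub hI2
    have iC : Integrable (fun _ : ℝ × ℝ => θ.2.1^2) ℙd := integrable_const _
    have iABC : Integrable (fun x : ℝ × ℝ => 2*θ.2.1*x.1 - x.1^2 - θ.2.1^2) ℙd := iAB.sub iC
    have iD : Integrable (fun x : ℝ × ℝ => 2*(θ.1-θ.2.1) *
      (max x.1 0 * (if x.2 ≤ θ.2.2 then (1:ℝ) else 0))) ℙd := (hIp θ.2.2).const_mul _
    have iABCD : Integrable (fun x : ℝ × ℝ => 2*θ.2.1*x.1 - x.1^2 - θ.2.1^2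
      + 2*(θ.1-θ.2.1) * (max x.1 0 * (if x.2 ≤ θ.2.2 then (1:ℝ) else 0))) ℙd := iABC.add iD
    have iE : Integrable (fun x : ℝ × ℝ => 2*(θ.1-θ.2.1) *
      (max (-x.1) 0 * (if x.2 ≤ θ.2.2 then (1:ℝ) else 0))) ℙd := (hIm θ.2.2).const_mul _
    have iABCDE : Integrable (fun x : ℝ × ℝ => 2*θ.2.1*x.1 - x.1^2 - θ.2.1^2
      + 2*(θ.1-θ.2.1) * (max x.1 0 * (if x.2 ≤ θ.2.2 then (1:ℝ) else 0))
      - 2*(θ.1-θ.2.1) * (max (-x.1) 0 * (if x.2 ≤ θ.2.2 then (1:ℝ) else 0))) ℙd := iABCD.sub iE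
    have iF : Integrable (fun x : ℝ × ℝ => (θ.1^2-θ.2.1^2) *
      ((1:ℝ) * (if x.2 ≤ θ.2.2 then (1:ℝ) else 0))) ℙd := (hIi θ.2.2).const_mul _
    rw [integral_congr_ae (ae_of_all _ fun x => mfn_eq θ x)]
    rw [integral_sub iABCDE iF, integral_sub iABCD iE, integral_add iABC iD,
      integral_sub iAB iC, integral_sub iA hI2, integral_const_mul, integral_const_mul,
      integral_const_mul, integral_const_mul, integral_const]
    simp [measure_univ, hμ1, hμ2, hGp, hGm, hGi]
  -- the decomposition of the empirical criterion
  have hn0 : (n:ℝ) ≠ 0 := by positivity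
  have hMn : (n:ℝ)⁻¹ * ∑ i ∈ Finset.range n, mfn θ (Xd i ω)
      = 2*θ.2.1*S1 - S2 - θ.2.1^2 + 2*(θ.1-θ.2.1) * Sp - 2*(θ.1-θ.2.1) * Sm
        - (θ.1^2-θ.2.1^2) * Si := by
    rw [Finset.sum_congr rfl fun i _ => mfn_eq θ (Xd i ω)]
    simp only [Finset.sum_sub_distrib, Finset.sum_add_distrib, ← Finset.mul_sum,
      Finset.sum_const, Finset.card_range, nsmul_eq_mul]
    rw [hS1, hS2, hSp, hSm, hSi]
    field_simp
  rw [Real.dist_eq, hM, hMn]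
  -- gather the error bounds
  have e2 : |μ2 - S2| < ε' := by
    have h := Metric.mem_ball.1 h2n
    rw [Real.dist_eq] at h
    rwa [abs_sub_comm]
  have e1 : |μ1 - S1| < ε' := by
    have h := Metric.mem_ball.1 h1n
    rw [Real.dist_eq] at h
    rwa [abs_sub_comm]
  have ep : |Gp - Sp| < ε' := by
    have := hpn θ.2.2 hζmem; rwa [Real.dist_eq] at this
  have em : |Gm - Sm| < ε' := by
    have := hmn θ.2.2 hζmem; rwa [Real.dist_eq] at this
  have ei : |Gi - Si| < ε' := by
    have := hin θ.2.2 hζmem; rwa [Real.dist_eq] at this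
  -- final algebraic estimate
  have key : (2*θ.2.1*μ1 - μ2 - θ.2.1^2 + 2*(θ.1-θ.2.1) * Gp - 2*(θ.1-θ.2.1) * Gm
        - (θ.1^2-θ.2.1^2) * Gi)
      - (2*θ.2.1*S1 - S2 - θ.2.1^2 + 2*(θ.1-θ.2.1) * Sp - 2*(θ.1-θ.2.1) * Sm
        - (θ.1^2-θ.2.1^2) * Si)
      = 2*θ.2.1*(μ1 - S1) - (μ2 - S2) + 2*(θ.1-θ.2.1)*(Gp - Sp)
        - 2*(θ.1-θ.2.1)*(Gm - Sm) - (θ.1^2-θ.2.1^2)*(Gi - Si) := by ring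
  rw [key]
  have habs2 : |2*θ.2.1| ≤ 2*B := by
    rw [abs_mul, abs_two]; linarith [hβB]
  have habs3 : |2*(θ.1-θ.2.1)| ≤ 4*B := by
    rw [abs_mul, abs_two]
    have : |θ.1 - θ.2.1| ≤ |θ.1| + |θ.2.1| := abs_sub _ _
    linarith [hαB, hβB]
  have habs5 : |θ.1^2-θ.2.1^2| ≤ 2*B^2 := by
    have h1 : |θ.1^2 - θ.2.1^2| ≤ |θ.1^2| + |θ.2.1^2| := abs_sub _ _
    rw [abs_pow, abs_pow] at h1
    have h2 : |θ.1|^2 ≤ B^2 := pow_le_pow_left₀ (abs_nonneg _) hαB 2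
    have h3 : |θ.2.1|^2 ≤ B^2 := pow_le_pow_left₀ (abs_nonneg _) hβB 2
    linarith
  have t1 : |2*θ.2.1*(μ1 - S1)| ≤ 2*B*ε' := by
    rw [abs_mul]
    exact mul_le_mul habs2 e1.le (abs_nonneg _) (by positivity)
  have t3 : |2*(θ.1-θ.2.1)*(Gp - Sp)| ≤ 4*B*ε' := by
    rw [abs_mul]
    exact mul_le_mul habs3 ep.le (abs_nonneg _) (by positivity)
  have t4 : |2*(θ.1-θ.2.1)*(Gm - Sm)| ≤ 4*B*ε' := by
    rw [abs_mul]
    exact mul_le_mul habs3 em.le (abs_nonneg _) (by positivity)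
  have t5 : |(θ.1^2-θ.2.1^2)*(Gi - Si)| ≤ 2*B^2*ε' := by
    rw [abs_mul]
    exact mul_le_mul habs5 ei.le (abs_nonneg _) (by positivity)
  obtain ⟨a1, a1'⟩ := abs_le.1 t1
  obtain ⟨a2, a2'⟩ := abs_lt.1 e2
  obtain ⟨a3, a3'⟩ := abs_le.1 t3
  obtain ⟨a4, a4'⟩ := abs_le.1 t4
  obtain ⟨a5, a5'⟩ := abs_le.1 t5
  rw [abs_lt]
  constructor <;> linarith [hsum]
end
end

section
/- Let s < t be real numbers. Then the sequence of random variables W_n = n·ℙ_n(1{ζ₀ + s/n < Z ≤ ζ₀ + t/n}) = #{i ≤ n : ζ₀ + s/n < Z_i ≤ ζ₀ + t/n} does not converge in probability: there exists no random variable V such that P(|W_n − V| > ε) → 0 for every ε > 0. (Lemma 4.5(i).) -/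
open MeasureTheory Filter Set Topology

lemma aux_exp10 {a : ℕ → ℝ} {L : ℝ} (h : Tendsto (fun n : ℕ => (n : ℝ) * a n) atTop (𝓝 L)) :
    Tendsto (fun n : ℕ => (1 + a n) ^ n) atTop (𝓝 (Real.exp L)) := by
  have hinv : Tendsto (fun n : ℕ => ((n : ℝ))⁻¹) atTop (𝓝 0) :=
    tendsto_inv_atTop_zero.comp tendsto_natCast_atTop_atTop
  have ha0 : Tendsto a atTop (𝓝 0) := by
    have := h.mul hinv
    rw [mul_zero] at this
    refine this.congr' ?_
    filter_upwards [eventually_gt_atTop 0] with n hn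
    have : (n : ℝ) ≠ 0 := Nat.cast_ne_zero.mpr hn.ne'
    field_simp
  -- the auxiliary function log(1+x)/x
  set g : ℝ → ℝ := fun x => if x = 0 then (1 : ℝ) else Real.log (1 + x) / x with hgdef
  have hderivlog : HasDerivAt (fun x : ℝ => Real.log (1 + x)) 1 0 := by
    have h1 : HasDerivAt (fun x : ℝ => 1 + x) 1 0 := (hasDerivAt_id 0).const_add 1
    have := (Real.hasDerivAt_log (by norm_num : (1 : ℝ) + 0 ≠ 0)).comp 0 h1
    simp only [add_zero, inv_one, mul_one] at this
    exact this
  have hg : Tendsto g (𝓝 0) (𝓝 1) := by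
    rw [← nhdsNE_sup_pure 0, tendsto_sup]
    constructor
    · have hs := hasDerivAt_iff_tendsto_slope.mp hderivlog
      refine hs.congr' ?_
      filter_upwards [self_mem_nhdsWithin] with x hx
      have hx0 : x ≠ 0 := hx
      simp [slope_def_field, hgdef, hx0]
    · have h0 : g 0 = 1 := by simp [hgdef]
      have := tendsto_pure_nhds g 0
      rwa [h0] at this
  have hkey : ∀ n : ℕ, (n : ℝ) * Real.log (1 + a n) = ((n : ℝ) * a n) * g (a n) := by
    intro n
    rcases eq_or_ne (a n) 0 with h0 | h0
    · simp [h0, hgdef]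
    · simp [hgdef, h0]
      field_simp
  have hlog : Tendsto (fun n : ℕ => (n : ℝ) * Real.log (1 + a n)) atTop (𝓝 L) := by
    have := h.mul (hg.comp ha0)
    rw [mul_one] at this
    exact (this.congr fun n => (hkey n).symm)
  have hexp : Tendsto (fun n : ℕ => Real.exp ((n : ℝ) * Real.log (1 + a n))) atTop
      (𝓝 (Real.exp L)) := (Real.continuous_exp.tendsto L).comp hlog
  refine hexp.congr' ?_
  have hev : ∀ᶠ n in atTop, |a n| < 1 := by
    have := ha0.eventually (eventually_abs_sub_lt 0 one_pos)
    simpa using this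
  filter_upwards [hev] with n hn
  have hpos : 0 < 1 + a n := by
    have := abs_lt.mp hn
    linarith [this.1]
  rw [Real.exp_nat_mul, Real.exp_log hpos]

lemma aux_slope10 {F : ℝ → ℝ} {fz ζ₀ : ℝ} (hd : HasDerivAt F fz ζ₀) (c : ℝ) :
    Tendsto (fun n : ℕ => (n : ℝ) * (F (ζ₀ + c / n) - F ζ₀)) atTop (𝓝 (c * fz)) := by
  rcases eq_or_ne c 0 with rfl | hc
  · simpa using (tendsto_const_nhds : Tendsto (fun _ : ℕ => (0:ℝ)) atTop (𝓝 0))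
  · have hslope := hasDerivAt_iff_tendsto_slope.mp hd
    have hcomp : Tendsto (fun n : ℕ => ζ₀ + c / n) atTop (𝓝[≠] ζ₀) := by
      have h1 : Tendsto (fun n : ℕ => ζ₀ + c / n) atTop (𝓝 ζ₀) := by
        have : Tendsto (fun n : ℕ => c / (n : ℝ)) atTop (𝓝 0) := by
          have hinv : Tendsto (fun n : ℕ => ((n : ℝ))⁻¹) atTop (𝓝 0) :=
            tendsto_inv_atTop_zero.comp tendsto_natCast_atTop_atTop
          simpa [div_eq_mul_inv] using hinv.const_mul c
        simpa using (tendsto_const_nhds : Tendsto (fun _ : ℕ => ζ₀) atTop (𝓝 ζ₀)).add this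
      refine tendsto_nhdsWithin_of_tendsto_nhds_of_eventually_within _ h1 ?_
      filter_upwards [eventually_gt_atTop 0] with n hn
      have : c / (n : ℝ) ≠ 0 := div_ne_zero hc (Nat.cast_ne_zero.mpr hn.ne')
      simp [this]
    have h2 := (hslope.comp hcomp).const_mul c
    refine h2.congr' ?_
    filter_upwards [eventually_gt_atTop 0] with n hn
    have hn0 : (n : ℝ) ≠ 0 := Nat.cast_ne_zero.mpr hn.ne'
    simp only [Function.comp_apply, slope_def_field]
    have hz : ζ₀ + c / ↑n - ζ₀ = c / ↑n := by ring
    rw [hz]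
    field_simp

/-- Lemma 4.5(i): for i.i.d. real random variables whose common CDF is differentiable
at `ζ₀` with positive derivative, the counts `#{i ≤ n : ζ₀ + s/n < Z_i ≤ ζ₀ + t/n}`
do not converge in probability to any random variable. -/
theorem stmt10 {Ω : Type} [MeasurableSpace Ω] (P : Measure Ω) [IsProbabilityMeasure P]
    (Z : ℕ → Ω → ℝ) (hZmeas : ∀ i, Measurable (Z i))
    (μZ : Measure ℝ) [IsProbabilityMeasure μZ]
    (hZlaw : ∀ i, Measure.map (Z i) P = μZ)
    (hZindep : ProbabilityTheory.iIndepFun Z P)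
    (ζ₀ fz : ℝ)
    (hderiv : HasDerivAt (fun z => (μZ (Set.Iic z)).toReal) fz ζ₀)
    (hfz : 0 < fz) (s t : ℝ) (hst : s < t) :
    ¬ ∃ V : Ω → ℝ, Measurable V ∧ ∀ ε > (0 : ℝ),
      Tendsto (fun n : ℕ => P {ω | ε <
        |(∑ i ∈ Finset.range n, (Set.Ioc (ζ₀ + s / n) (ζ₀ + t / n)).indicator
          (fun _ => (1 : ℝ)) (Z i ω)) - V ω|}) atTop (nhds 0) := by
  classical
  rintro ⟨V, hV, hconv⟩
  -- notation
  let I : ℕ → Set ℝ := fun n => Set.Ioc (ζ₀ + s / (n : ℝ)) (ζ₀ + t / (n : ℝ))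
  let W : ℕ → Ω → ℝ := fun n ω =>
    ∑ i ∈ Finset.range n, (I n).indicator (fun _ => (1 : ℝ)) (Z i ω)
  let a : ℕ → ℝ := fun n => (μZ (I n)).toReal
  let lam : ℝ := (t - s) * fz
  have hImeas : ∀ n, MeasurableSet (I n) := fun n => measurableSet_Ioc
  have hlampos : 0 < lam := mul_pos (sub_pos.mpr hst) hfz
  -- Step A : n * a n → lam
  have hadiff : ∀ n : ℕ, 1 ≤ n → a n =
      ((μZ (Set.Iic (ζ₀ + t / (n : ℝ)))).toReal - (μZ (Set.Iic (ζ₀ + s / (n : ℝ)))).toReal) := by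
    intro n hn
    have hn' : (0 : ℝ) < n := by exact_mod_cast hn
    have hle : ζ₀ + s / (n : ℝ) ≤ ζ₀ + t / (n : ℝ) := by
      have := (div_le_div_iff_of_pos_right hn').mpr hst.le
      linarith
    show (μZ (I n)).toReal = _
    have hioc : I n = Set.Iic (ζ₀ + t / (n : ℝ)) \ Set.Iic (ζ₀ + s / (n : ℝ)) :=
      by ext x; simp only [I, Set.mem_Ioc, Set.mem_diff, Set.mem_Iic, not_le]; exact and_comm
    rw [hioc, measure_diff (Set.Iic_subset_Iic.mpr hle)
      measurableSet_Iic.nullMeasurableSet (measure_ne_top μZ _),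
      ENNReal.toReal_sub_of_le (measure_mono (Set.Iic_subset_Iic.mpr hle)) (measure_ne_top μZ _)]
  have hna : Tendsto (fun n : ℕ => (n : ℝ) * a n) atTop (𝓝 lam) := by
    have h1 := (aux_slope10 hderiv t).sub (aux_slope10 hderiv s)
    have h2 : t * fz - s * fz = lam := by ring
    rw [h2] at h1
    refine h1.congr' ?_
    filter_upwards [eventually_ge_atTop 1] with n hn
    rw [hadiff n hn]
    ring
  have hdbl : Tendsto (fun n : ℕ => 2 * n) atTop atTop :=
    tendsto_atTop_mono (fun n => by show n ≤ 2 * n; omega) tendsto_id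
  have h2a : Tendsto (fun n : ℕ => (n : ℝ) * a (2 * n)) atTop (𝓝 (lam / 2)) := by
    have h1 := hna.comp hdbl
    have h2 := h1.const_mul (1 / 2 : ℝ)
    have h3 : (1 / 2 : ℝ) * lam = lam / 2 := by ring
    rw [h3] at h2
    refine h2.congr ?_
    intro n
    simp only [Function.comp_apply]
    push_cast
    ring
  -- limits of powers
  have hA : Tendsto (fun n : ℕ => (1 - a n) ^ n) atTop (𝓝 (Real.exp (-lam))) := by
    have h := aux_exp10 (a := fun n => -(a n)) (L := -lam)
      (by refine (hna.neg).congr fun n => by ring)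
    refine h.congr fun n => by simp [sub_eq_add_neg]
  have hB : Tendsto (fun n : ℕ => (1 - a (2 * n)) ^ n) atTop (𝓝 (Real.exp (-(lam / 2)))) := by
    have h := aux_exp10 (a := fun n => -(a (2 * n))) (L := -(lam / 2))
      (by refine (h2a.neg).congr fun n => by ring)
    refine h.congr fun n => by simp [sub_eq_add_neg]
  -- probability computation
  let q : ℕ → ENNReal := fun n => μZ ((I n)ᶜ)
  have hq1 : ∀ n, q n ≤ 1 := fun n => prob_le_one
  have hqa : ∀ n, (q n).toReal = 1 - a n := by
    intro n
    show (μZ ((I n)ᶜ)).toReal = _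
    rw [measure_compl (hImeas n) (measure_ne_top μZ _), measure_univ,
      ENNReal.toReal_sub_of_le prob_le_one ENNReal.one_ne_top, ENNReal.toReal_one]
  have hpre : ∀ (i : ℕ) (S : Set ℝ), MeasurableSet S → P (Z i ⁻¹' S) = μZ S := by
    intro i S hS
    rw [← hZlaw i, Measure.map_apply (hZmeas i) hS]
  let A : ℕ → Set Ω := fun n => ⋂ i ∈ Finset.range n, Z i ⁻¹' ((I n)ᶜ)
  let D : ℕ → Set Ω := fun n => ⋂ i ∈ Finset.Ico n (2 * n), Z i ⁻¹' ((I (2 * n))ᶜ)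
  have hPA : ∀ n, P (A n) = q n ^ n := by
    intro n
    have := hZindep.meas_biInter (S := Finset.range n)
      (s := fun i => Z i ⁻¹' ((I n)ᶜ))
      (fun i _ => ⟨(I n)ᶜ, (hImeas n).compl, rfl⟩)
    rw [show A n = ⋂ i ∈ Finset.range n, Z i ⁻¹' ((I n)ᶜ) from rfl, this]
    rw [Finset.prod_congr rfl (fun i _ => hpre i _ (hImeas n).compl)]
    simp [Finset.prod_const, q]
  have hPAD : ∀ n, P (A n ∩ D n) = q n ^ n * q (2 * n) ^ n := by
    intro n
    have hset : A n ∩ D n = ⋂ i ∈ Finset.range (2 * n),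
        Z i ⁻¹' (if i < n then (I n)ᶜ else (I (2 * n))ᶜ) := by
      ext ω
      simp only [A, D, Set.mem_inter_iff, Set.mem_iInter, Finset.mem_range, Finset.mem_Ico]
      constructor
      · rintro ⟨h1, h2⟩ i hi
        by_cases hin : i < n
        · simpa [hin] using h1 i hin
        · simpa [hin] using h2 i ⟨by omega, hi⟩
      · intro h
        refine ⟨fun i hi => ?_, fun i hi => ?_⟩
        · have := h i (by omega)
          simpa [hi] using this
        · have := h i hi.2
          simpa [Nat.not_lt.mpr hi.1] using this
    rw [hset, hZindep.meas_biInter (S := Finset.range (2 * n))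
      (fun i _ => ⟨_, by split <;> exact (hImeas _).compl, rfl⟩)]
    rw [Finset.prod_congr rfl (fun i _ => hpre i _ (by split <;> exact (hImeas _).compl))]
    rw [Finset.range_eq_Ico, ← Finset.prod_Ico_consecutive _ (Nat.zero_le n) (by omega : n ≤ 2 * n)]
    rw [Finset.prod_congr rfl (fun i hi => by
        rw [if_pos (Finset.mem_Ico.mp hi).2]),
      Finset.prod_congr (rfl : Finset.Ico n (2*n) = Finset.Ico n (2*n)) (fun i hi => by
        rw [if_neg (Nat.not_lt.mpr (Finset.mem_Ico.mp hi).1)])]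
    simp only [Finset.prod_const, Nat.card_Ico]
    rw [show 2 * n - n = n by omega, show n - 0 = n by omega]
  have hDmeas : ∀ n, MeasurableSet (A n ∩ D n) := by
    intro n
    refine MeasurableSet.inter ?_ ?_ <;>
      exact MeasurableSet.biInter (Set.to_countable _)
        (fun i _ => hZmeas i (hImeas _).compl)
  have hkey : ∀ n, P (A n \ D n) = q n ^ n - q n ^ n * q (2 * n) ^ n := by
    intro n
    have h1 : A n \ D n = A n \ (A n ∩ D n) := (Set.diff_self_inter).symm
    rw [h1, measure_diff Set.inter_subset_left (hDmeas n).nullMeasurableSet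
      (measure_ne_top P _), hPA, hPAD]
  have hfin : ∀ n, q n ^ n ≠ ⊤ := fun n =>
    (lt_of_le_of_lt (pow_le_one' (hq1 n) n) ENNReal.one_lt_top).ne
  have hmle : ∀ n, q n ^ n * q (2 * n) ^ n ≤ q n ^ n := by
    intro n
    calc q n ^ n * q (2 * n) ^ n ≤ q n ^ n * 1 := by
          gcongr
          exact pow_le_one' (hq1 _) n
      _ = q n ^ n := mul_one _
  have htoReal : ∀ n, (P (A n \ D n)).toReal
      = (1 - a n) ^ n * (1 - (1 - a (2 * n)) ^ n) := by
    intro n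
    rw [hkey n, ENNReal.toReal_sub_of_le (hmle n) (hfin n), ENNReal.toReal_mul,
      ENNReal.toReal_pow, ENNReal.toReal_pow, hqa, hqa]
    ring
  -- the limit of the real sequence
  have hr : Tendsto (fun n : ℕ => (P (A n \ D n)).toReal) atTop
      (𝓝 (Real.exp (-lam) * (1 - Real.exp (-(lam / 2))))) := by
    have := hA.mul ((tendsto_const_nhds : Tendsto (fun _ : ℕ => (1 : ℝ)) atTop (𝓝 1)).sub hB)
    refine this.congr fun n => (htoReal n).symm
  -- convergence in probability gives the sequence tends to 0
  have h1 := hconv (1 / 4) (by norm_num)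
  have h2 : Tendsto (fun n : ℕ => P {ω | (1 / 4 : ℝ) < |W (2 * n) ω - V ω|}) atTop (𝓝 0) :=
    h1.comp hdbl
  have hsub : ∀ n : ℕ, A n \ D n ⊆
      {ω | (1 / 4 : ℝ) < |W n ω - V ω|} ∪ {ω | (1 / 4 : ℝ) < |W (2 * n) ω - V ω|} := by
    intro n ω hω
    obtain ⟨hωA, hωD⟩ := hω
    have hWn0 : W n ω = 0 := by
      refine Finset.sum_eq_zero fun i hi => ?_
      have : Z i ω ∈ (I n)ᶜ := by
        have := Set.mem_iInter₂.mp hωA i hi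
        exact this
      exact Set.indicator_of_notMem this _
    have hW2 : (1 : ℝ) ≤ W (2 * n) ω := by
      have : ∃ i, i ∈ Finset.Ico n (2 * n) ∧ Z i ω ∈ I (2 * n) := by
        by_contra hcon
        push_neg at hcon
        exact hωD (Set.mem_iInter₂.mpr fun i hi => hcon i hi)
      obtain ⟨i, hi, hZi⟩ := this
      have him : i ∈ Finset.range (2 * n) := by
        simp only [Finset.mem_range]
        exact (Finset.mem_Ico.mp hi).2
      have hone : (I (2 * n)).indicator (fun _ => (1 : ℝ)) (Z i ω) = 1 :=
        Set.indicator_of_mem hZi _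
      calc (1 : ℝ) = (I (2 * n)).indicator (fun _ => (1 : ℝ)) (Z i ω) := hone.symm
        _ ≤ W (2 * n) ω := Finset.single_le_sum
            (f := fun j => (I (2 * n)).indicator (fun _ => (1 : ℝ)) (Z j ω))
            (fun j _ => Set.indicator_nonneg (fun _ _ => zero_le_one) _) him
    by_contra hcon
    simp only [Set.mem_union, Set.mem_setOf_eq, not_or, not_lt] at hcon
    obtain ⟨hc1, hc2⟩ := hcon
    have habs : |W (2 * n) ω - W n ω| ≤ 1 / 2 := by
      have := abs_sub_le (W (2 * n) ω) (V ω) (W n ω)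
      have h4 : |V ω - W n ω| = |W n ω - V ω| := abs_sub_comm _ _
      linarith [this, h4 ▸ this]
    rw [hWn0, sub_zero] at habs
    have := le_abs_self (W (2 * n) ω)
    linarith
  have htend0 : Tendsto (fun n : ℕ => P (A n \ D n)) atTop (𝓝 0) := by
    have hle : ∀ n : ℕ, P (A n \ D n) ≤
        P {ω | (1 / 4 : ℝ) < |W n ω - V ω|} + P {ω | (1 / 4 : ℝ) < |W (2 * n) ω - V ω|} :=
      fun n => (measure_mono (hsub n)).trans (measure_union_le _ _)
    have hsum : Tendsto (fun n : ℕ => P {ω | (1 / 4 : ℝ) < |W n ω - V ω|}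
        + P {ω | (1 / 4 : ℝ) < |W (2 * n) ω - V ω|}) atTop (𝓝 0) := by
      have := Filter.Tendsto.add h1 h2
      simpa using this
    exact tendsto_of_tendsto_of_tendsto_of_le_of_le tendsto_const_nhds hsum
      (fun n => zero_le) hle
  have htend0' : Tendsto (fun n : ℕ => (P (A n \ D n)).toReal) atTop (𝓝 0) := by
    have := (ENNReal.tendsto_toReal (ENNReal.zero_ne_top)).comp htend0
    simpa [Function.comp_def] using this
  have heq := tendsto_nhds_unique htend0' hr
  have hexp1 : (0 : ℝ) < Real.exp (-lam) := Real.exp_pos _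
  have hexp2 : Real.exp (-(lam / 2)) < 1 := by
    rw [Real.exp_lt_one_iff]
    linarith
  nlinarith [heq, hexp1, hexp2]
end
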